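/- Let M ≤ N be integers, γ a measure on ℤ with mass function q positive on a contiguous support containing ⟦M,N⟧, and h : ⟦M,N⟧ → ℝ an arbitrary function. Let 𝒫ₕᵞ(⟦M,N⟧) denote the set of probability distributions supported on ⟦M,N⟧ that are log-concave with respect to γ and satisfy E[h(X)] ≥ 0. If a probability distribution P_X is an extreme point of the convex hull Conv(𝒫ₕᵞ(⟦M,N⟧)), then its probability mass function f with respect to γ has the form f(n) = C·pⁿ·1_{⟦k,l⟧}(n) for some constants C, p > 0 and integers M ≤ k ≤ l ≤ N. -/

import Mathlib

set_option maxHeartbeats 1000000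

/-- The support of `f : ℤ → ℝ` is contiguous. -/
def ContigSupportInt (f : ℤ → ℝ) : Prop :=
  ∀ a b c : ℤ, a ≤ b → b ≤ c → 0 < f a → 0 < f c → 0 < f b

/-- A p.m.f. `p` is log-concave with respect to the reference mass function `q`:
the ratio `p/q` satisfies `(p/q)(n)² ≥ (p/q)(n-1)·(p/q)(n+1)` for all `n` and has
contiguous support. -/
def IsLogConcaveWrt (q p : ℤ → ℝ) : Prop :=
  (∀ n : ℤ, (p (n - 1) / q (n - 1)) * (p (n + 1) / q (n + 1)) ≤ (p n / q n) ^ 2) ∧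
    ContigSupportInt (fun n => p n / q n)

/-- `𝒫ₕᵞ(⟦M,N⟧)`: probability mass functions supported on `⟦M,N⟧`, log-concave with
respect to `q`, with `E[h(X)] ≥ 0`. -/
def LCPmfSet (q : ℤ → ℝ) (M N : ℤ) (h : ℤ → ℝ) : Set (ℤ → ℝ) :=
  { p | (∀ n, 0 ≤ p n) ∧ (∀ n : ℤ, n ∉ Finset.Icc M N → p n = 0) ∧
      (∑ n ∈ Finset.Icc M N, p n) = 1 ∧ IsLogConcaveWrt q p ∧
      0 ≤ ∑ n ∈ Finset.Icc M N, h n * p n }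

/-- A 2×3 homogeneous linear system over `ℝ` has a nontrivial solution. -/
lemma exists_kernel_vec (a₁ b₁ c₁ a₂ b₂ c₂ : ℝ) :
    ∃ x y z : ℝ, ¬(x = 0 ∧ y = 0 ∧ z = 0) ∧
      a₁ * x + b₁ * y + c₁ * z = 0 ∧ a₂ * x + b₂ * y + c₂ * z = 0 := by
  set A : Matrix (Fin 3) (Fin 3) ℝ := !![a₁, b₁, c₁; a₂, b₂, c₂; 0, 0, 0] with hA
  have hdet : A.det = 0 :=
    Matrix.det_eq_zero_of_row_eq_zero 2 (fun j => by fin_cases j <;> simp [hA])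
  obtain ⟨v, hv0, hv⟩ := (Matrix.exists_mulVec_eq_zero_iff).2 hdet
  refine ⟨v 0, v 1, v 2, ?_, ?_, ?_⟩
  · rintro ⟨h0, h1, h2⟩
    apply hv0
    funext i
    fin_cases i <;> simp [h0, h1, h2]
  · have := congrFun hv 0
    simpa [hA, Matrix.mulVec, dotProduct, Fin.sum_univ_three, mul_comm] using this
  · have := congrFun hv 1
    simpa [hA, Matrix.mulVec, dotProduct, Fin.sum_univ_three, mul_comm] using this

/-- Any extreme point of the convex hull of `𝒫ₕᵞ(⟦M,N⟧)` has a p.m.f. with respect to `γ`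
of the log-affine form `f(n) = C·ρⁿ·1_{⟦k,l⟧}(n)`. -/
theorem extremePoint_isLogAffine (M N : ℤ) (hMN : M ≤ N)
    (q : ℤ → ℝ) (hq0 : ∀ n, 0 ≤ q n) (hqc : ContigSupportInt q)
    (hqpos : ∀ n ∈ Finset.Icc M N, 0 < q n)
    (h : ℤ → ℝ) (p : ℤ → ℝ)
    (hp : p ∈ (convexHull ℝ (LCPmfSet q M N h)).extremePoints ℝ) :
    ∃ C : ℝ, 0 < C ∧ ∃ ρ : ℝ, 0 < ρ ∧ ∃ k l : ℤ, M ≤ k ∧ k ≤ l ∧ l ≤ N ∧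
      ∀ n : ℤ, p n / q n = if k ≤ n ∧ n ≤ l then C * ρ ^ n else 0 := by
  classical
  have hpmem : p ∈ LCPmfSet q M N h := extremePoints_convexHull_subset hp
  obtain ⟨hp0, hpz, hpsum, ⟨hlc, hcg⟩, hEh⟩ := hpmem
  set g : ℤ → ℝ := fun n => p n / q n with hg
  have hgapp : ∀ n, p n / q n = g n := fun n => by simp only [hg]
  have hlc' : ∀ n : ℤ, g (n - 1) * g (n + 1) ≤ g n ^ 2 := by
    intro n; simp only [hg]; exact hlc n
  have hg0 : ∀ n, 0 ≤ g n := fun n => by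
    simp only [hg]; exact div_nonneg (hp0 n) (hq0 n)
  have hgz : ∀ n, n ∉ Finset.Icc M N → g n = 0 := fun n hn => by
    simp only [hg, hpz n hn, zero_div]
  -- the support is nonempty
  have hex : ∃ n ∈ Finset.Icc M N, 0 < p n := by
    by_contra hc
    push_neg at hc
    have : (∑ n ∈ Finset.Icc M N, p n) = 0 :=
      Finset.sum_eq_zero fun n hn => le_antisymm (hc n hn) (hp0 n)
    rw [hpsum] at this; norm_num at this
  obtain ⟨n₁, hn₁, hpn₁⟩ := hex
  set S : Finset ℤ := (Finset.Icc M N).filter (fun n => 0 < g n) with hS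
  have hSne : S.Nonempty := ⟨n₁, by
    simp only [hS, Finset.mem_filter]
    refine ⟨hn₁, ?_⟩
    simp only [hg]
    exact div_pos hpn₁ (hqpos n₁ hn₁)⟩
  set k := S.min' hSne with hk
  set l := S.max' hSne with hl
  have hkS : k ∈ S := S.min'_mem hSne
  have hlS : l ∈ S := S.max'_mem hSne
  have hMk : M ≤ k := (Finset.mem_Icc.1 (Finset.mem_filter.1 hkS).1).1
  have hlN : l ≤ N := (Finset.mem_Icc.1 (Finset.mem_filter.1 hlS).1).2
  have hkl : k ≤ l := S.min'_le l hlS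
  have hgk : 0 < g k := (Finset.mem_filter.1 hkS).2
  have hgl : 0 < g l := (Finset.mem_filter.1 hlS).2
  have hgpos : ∀ n, k ≤ n → n ≤ l → 0 < g n := fun n h1 h2 => hcg k n l h1 h2 hgk hgl
  have hgin : ∀ n, 0 < g n → k ≤ n ∧ n ≤ l := by
    intro n hn
    have hmem : n ∈ Finset.Icc M N := by
      by_contra hc; rw [hgz n hc] at hn; exact lt_irrefl _ hn
    have hnS : n ∈ S := Finset.mem_filter.2 ⟨hmem, hn⟩
    exact ⟨S.min'_le n hnS, S.le_max' n hnS⟩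
  have hgout : ∀ n, ¬(k ≤ n ∧ n ≤ l) → g n = 0 := by
    intro n hn
    by_contra hc
    exact hn (hgin n ((hg0 n).lt_of_ne (Ne.symm hc)))
  by_cases hcase : ∀ n, k < n → n < l → g (n - 1) * g (n + 1) = g n ^ 2
  · -- log-affine case : conclude directly
    rcases eq_or_lt_of_le hkl with heq | hlt
    · refine ⟨g k, hgk, 1, one_pos, k, l, hMk, hkl, hlN, ?_⟩
      intro n
      rw [hgapp n]
      by_cases hn : k ≤ n ∧ n ≤ l
      · have hnk : n = k := by omega
        rw [if_pos hn, hnk, one_zpow, mul_one]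
      · rw [if_neg hn]; exact hgout n hn
    · have hgk1 : 0 < g (k + 1) := hgpos (k + 1) (by omega) (by omega)
      set ρ := g (k + 1) / g k with hρ
      have hρpos : 0 < ρ := div_pos hgk1 hgk
      have hρne : ρ ≠ 0 := ne_of_gt hρpos
      have hrat : ∀ j : ℕ, ∀ n : ℤ, n = k + j → n < l → g (n + 1) = ρ * g n := by
        intro j
        induction j with
        | zero =>
          intro n hn _
          have hnk : n = k := by omega
          rw [hnk, hρ, div_mul_cancel₀ _ (ne_of_gt hgk)]
        | succ i ih =>
          intro n hn hnl
          have hkn : k < n := by omega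
          have e1 : g (n - 1) * g (n + 1) = g n ^ 2 := hcase n hkn hnl
          have e2 : g n = ρ * g (n - 1) := by
            have := ih (n - 1) (by omega) (by omega)
            simpa using this
          have hgn1 : 0 < g (n - 1) := hgpos _ (by omega) (by omega)
          exact mul_left_cancel₀ (ne_of_gt hgn1) (by linear_combination e1 + g n * e2)
      have hgeo : ∀ j : ℕ, ∀ n : ℤ, n = k + j → n ≤ l → g n = g k * ρ ^ (n - k) := by
        intro j
        induction j with
        | zero =>
          intro n hn _
          have hnk : n = k := by omega
          rw [hnk]; simp
        | succ i ih =>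
          intro n hn hnl
          have h1 : g n = ρ * g (n - 1) := by
            have := hrat i (n - 1) (by omega) (by omega)
            simpa using this
          have h2 : g (n - 1) = g k * ρ ^ (n - 1 - k) := ih (n - 1) (by omega) (by omega)
          rw [h1, h2, show n - k = (n - 1 - k) + 1 by ring, zpow_add₀ hρne, zpow_one]
          ring
      refine ⟨g k * ρ ^ (-k), mul_pos hgk (zpow_pos hρpos _), ρ, hρpos, k, l, hMk, hkl, hlN, ?_⟩
      intro n
      rw [hgapp n]
      by_cases hn : k ≤ n ∧ n ≤ l
      · rw [if_pos hn, hgeo (n - k).toNat n (by omega) hn.2, mul_assoc, ← zpow_add₀ hρne,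
          neg_add_eq_sub]
      · rw [if_neg hn]; exact hgout n hn
  · -- otherwise, derive a contradiction with extremality
    exfalso
    push_neg at hcase
    obtain ⟨m, hkm, hml, hne⟩ := hcase
    have hstrict : g (m - 1) * g (m + 1) < g m ^ 2 := lt_of_le_of_ne (hlc' m) hne
    set κ : ℤ → ℝ := fun n => ((max (n - m) 0 : ℤ) : ℝ) with hκ
    have hκaff : ∀ n : ℤ, n ≠ m → κ (n - 1) + κ (n + 1) = 2 * κ n := by
      intro n hn
      simp only [hκ]
      have hz : (max (n - 1 - m) 0 : ℤ) + max (n + 1 - m) 0 = 2 * max (n - m) 0 := by omega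
      exact_mod_cast hz
    obtain ⟨α, β, γ, habc, heq1, heq2⟩ :=
      exists_kernel_vec (∑ n ∈ Finset.Icc M N, p n) (∑ n ∈ Finset.Icc M N, p n * n)
        (∑ n ∈ Finset.Icc M N, p n * κ n) (∑ n ∈ Finset.Icc M N, h n * p n)
        (∑ n ∈ Finset.Icc M N, h n * p n * n) (∑ n ∈ Finset.Icc M N, h n * p n * κ n)
    set V : ℤ → ℝ := fun n => α + β * n + γ * κ n with hV
    have hPV : ∑ n ∈ Finset.Icc M N, p n * V n = 0 := by
      have hcongr : ∀ n ∈ Finset.Icc M N,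
          p n * V n = p n * α + p n * n * β + p n * κ n * γ := by
        intro n _; simp only [hV]; ring
      rw [Finset.sum_congr rfl hcongr, Finset.sum_add_distrib, Finset.sum_add_distrib,
        ← Finset.sum_mul, ← Finset.sum_mul, ← Finset.sum_mul]
      linear_combination heq1
    have hHV : ∑ n ∈ Finset.Icc M N, h n * p n * V n = 0 := by
      have hcongr : ∀ n ∈ Finset.Icc M N,
          h n * p n * V n = h n * p n * α + h n * p n * n * β + h n * p n * κ n * γ := by
        intro n _; simp only [hV]; ring
      rw [Finset.sum_congr rfl hcongr, Finset.sum_add_distrib, Finset.sum_add_distrib,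
        ← Finset.sum_mul, ← Finset.sum_mul, ← Finset.sum_mul]
      linear_combination heq2
    have hVne : ∃ n₀, k ≤ n₀ ∧ n₀ ≤ l ∧ V n₀ ≠ 0 := by
      by_contra hc
      push_neg at hc
      have e1 : V (m - 1) = 0 := hc _ (by omega) (by omega)
      have e2 : V m = 0 := hc _ (by omega) (by omega)
      have e3 : V (m + 1) = 0 := hc _ (by omega) (by omega)
      simp only [hV, hκ] at e1 e2 e3
      rw [show max (m - 1 - m) 0 = (0:ℤ) by omega] at e1
      rw [show max (m - m) 0 = (0:ℤ) by omega] at e2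
      rw [show max (m + 1 - m) 0 = (1:ℤ) by omega] at e3
      push_cast at e1 e2 e3
      have hβ : β = 0 := by linear_combination e2 - e1
      have hα : α = 0 := by linear_combination e2 - (m : ℝ) * hβ
      have hγ : γ = 0 := by linear_combination e3 - hα - ((m : ℝ) + 1) * hβ
      exact habc ⟨hα, hβ, hγ⟩
    have hIne : (Finset.Icc (M - 1) (N + 1)).Nonempty := ⟨M, Finset.mem_Icc.2 (by omega)⟩
    set c := (Finset.Icc (M - 1) (N + 1)).sup' hIne (fun n => |V n|) with hc
    have hcb : ∀ n, M - 1 ≤ n → n ≤ N + 1 → |V n| ≤ c := by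
      intro n h1 h2
      rw [hc]
      exact Finset.le_sup' (fun j => |V j|) (Finset.mem_Icc.2 ⟨h1, h2⟩)
    have hc0 : 0 ≤ c := le_trans (abs_nonneg (V M)) (hcb M (by omega) (by omega))
    have hc1 : (0:ℝ) < c + 1 := by linarith
    set A := g (m - 1) * g (m + 1) with hA
    set B := g m ^ 2 with hB
    have hA0 : 0 ≤ A := mul_nonneg (hg0 _) (hg0 _)
    have hB0 : 0 ≤ B := by rw [hB]; positivity
    have hD : (0:ℝ) < 2 * (B + A + 1) := by linarith
    set ε := min (1 / (2 * (c + 1))) ((B - A) / (2 * (B + A + 1) * (c + 1))) with hε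
    have hεpos : 0 < ε := lt_min (by positivity)
      (div_pos (by linarith [hstrict]) (by positivity))
    have hεc1 : ε * (c + 1) ≤ 1 / 2 := by
      have h1 : ε ≤ 1 / (2 * (c + 1)) := min_le_left _ _
      have e : (1 / (2 * (c + 1))) * (c + 1) = 1 / 2 := by
        field_simp
      calc ε * (c + 1) ≤ (1 / (2 * (c + 1))) * (c + 1) :=
            mul_le_mul_of_nonneg_right h1 (by linarith)
        _ = 1 / 2 := e
    have hεc2 : ε * (c + 1) ≤ (B - A) / (2 * (B + A + 1)) := by
      have h1 : ε ≤ (B - A) / (2 * (B + A + 1) * (c + 1)) := min_le_right _ _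
      have e : ((B - A) / (2 * (B + A + 1) * (c + 1))) * (c + 1) = (B - A) / (2 * (B + A + 1)) := by
        field_simp
      calc ε * (c + 1) ≤ ((B - A) / (2 * (B + A + 1) * (c + 1))) * (c + 1) :=
            mul_le_mul_of_nonneg_right h1 (by linarith)
        _ = (B - A) / (2 * (B + A + 1)) := e
    set t := ε * c with ht
    have ht0 : 0 ≤ t := mul_nonneg hεpos.le hc0
    have htc : t ≤ ε * (c + 1) := mul_le_mul_of_nonneg_left (by linarith) hεpos.le
    have ht12 : t ≤ 1 / 2 := le_trans htc hεc1
    have ht2 : t * (2 * (B + A + 1)) ≤ B - A :=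
      (le_div_iff₀ hD).1 (le_trans htc hεc2)
    have htt : 0 ≤ t * t * (B - A) :=
      mul_nonneg (mul_nonneg ht0 ht0) (by linarith [hstrict])
    have hkey : A * ((1 + t) * (1 + t)) ≤ B * ((1 - t) * (1 - t)) := by
      linarith [ht2, ht0, htt]
    clear_value g S k l κ V c A B ε t
    -- the two perturbed distributions
    have hmain : ∀ s : ℝ, |s| ≤ ε → (fun n => p n * (1 + s * V n)) ∈ LCPmfSet q M N h := by
      intro s hsabs
      have hsb : ∀ n, M - 1 ≤ n → n ≤ N + 1 → 1 - t ≤ 1 + s * V n ∧ 1 + s * V n ≤ 1 + t := by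
        intro n h1 h2
        have h3 : |s * V n| ≤ t := by
          rw [abs_mul, ht]
          exact mul_le_mul hsabs (hcb n h1 h2) (abs_nonneg _) hεpos.le
        have h4 := abs_le.1 h3
        constructor <;> linarith [h4.1, h4.2]
      have hpos12 : ∀ n, M - 1 ≤ n → n ≤ N + 1 → (1:ℝ) / 2 ≤ 1 + s * V n := fun n h1 h2 => by
        linarith [(hsb n h1 h2).1]
      have hrw : ∀ j : ℤ, p j * (1 + s * V j) / q j = g j * (1 + s * V j) := by
        intro j
        rw [mul_div_right_comm]
        simp only [hg]
      refine ⟨fun n => ?_, fun n hn => ?_, ?_, ⟨fun n => ?_, ?_⟩, ?_⟩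
      · show 0 ≤ p n * (1 + s * V n)
        by_cases hn : n ∈ Finset.Icc M N
        · have hm := Finset.mem_Icc.1 hn
          exact mul_nonneg (hp0 n) (by linarith [hpos12 n (by omega) (by omega)])
        · simp [hpz n hn]
      · show p n * (1 + s * V n) = 0
        simp [hpz n hn]
      · show (∑ n ∈ Finset.Icc M N, p n * (1 + s * V n)) = 1
        have hcongr : ∀ n ∈ Finset.Icc M N,
            p n * (1 + s * V n) = p n + s * (p n * V n) := fun n _ => by ring
        rw [Finset.sum_congr rfl hcongr, Finset.sum_add_distrib, ← Finset.mul_sum, hPV, hpsum]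
        ring
      · -- log-concavity inequalities
        show (p (n - 1) * (1 + s * V (n - 1)) / q (n - 1)) *
            (p (n + 1) * (1 + s * V (n + 1)) / q (n + 1)) ≤
            (p n * (1 + s * V n) / q n) ^ 2
        rw [hrw (n - 1), hrw (n + 1), hrw n]
        by_cases hn1 : k ≤ n - 1 ∧ n + 1 ≤ l
        · obtain ⟨hn1a, hn1b⟩ := hn1
          have hb1 := hsb (n - 1) (by omega) (by omega)
          have hb2 := hsb n (by omega) (by omega)
          have hb3 := hsb (n + 1) (by omega) (by omega)
          by_cases hnm : n = m
          · subst hnm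
            calc g (n - 1) * (1 + s * V (n - 1)) * (g (n + 1) * (1 + s * V (n + 1)))
                = A * ((1 + s * V (n - 1)) * (1 + s * V (n + 1))) := by rw [hA]; ring
              _ ≤ A * ((1 + t) * (1 + t)) := by
                  refine mul_le_mul_of_nonneg_left ?_ hA0
                  exact mul_le_mul hb1.2 hb3.2 (by linarith [hb3.1]) (by linarith [ht0])
              _ ≤ B * ((1 - t) * (1 - t)) := hkey
              _ ≤ B * ((1 + s * V n) * (1 + s * V n)) := by
                  refine mul_le_mul_of_nonneg_left ?_ hB0
                  exact mul_le_mul hb2.1 hb2.1 (by linarith [ht12]) (by linarith [hb2.1, ht12])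
              _ = (g n * (1 + s * V n)) ^ 2 := by rw [hB]; ring
          · have haff : V (n - 1) + V (n + 1) = 2 * V n := by
              have hk' := hκaff n hnm
              simp only [hV]
              push_cast
              linear_combination γ * hk'
            have hv : s * V n = (s * V (n - 1) + s * V (n + 1)) / 2 := by
              linear_combination (-s / 2) * haff
            have hmul : (1 + s * V (n - 1)) * (1 + s * V (n + 1)) ≤ (1 + s * V n) ^ 2 := by
              rw [hv]
              nlinarith [sq_nonneg (s * V (n - 1) - s * V (n + 1))]
            have hf0 : 0 ≤ (1 + s * V (n - 1)) * (1 + s * V (n + 1)) :=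
              mul_nonneg (by linarith [hb1.1, ht12]) (by linarith [hb3.1, ht12])
            calc g (n - 1) * (1 + s * V (n - 1)) * (g (n + 1) * (1 + s * V (n + 1)))
                = (g (n - 1) * g (n + 1)) * ((1 + s * V (n - 1)) * (1 + s * V (n + 1))) := by ring
              _ ≤ g n ^ 2 * (1 + s * V n) ^ 2 := mul_le_mul (hlc' n) hmul hf0 (sq_nonneg _)
              _ = (g n * (1 + s * V n)) ^ 2 := by ring
        · have hzero : g (n - 1) = 0 ∨ g (n + 1) = 0 := by
            rcases not_and_or.1 hn1 with h' | h'
            · exact Or.inl (hgout _ (fun hh => h' hh.1))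
            · exact Or.inr (hgout _ (fun hh => h' hh.2))
          rcases hzero with h' | h' <;> rw [h'] <;>
            simpa using sq_nonneg (g n * (1 + s * V n))
      · -- contiguous support
        intro a b c' hab hbc ha hc'
        simp only [hrw] at ha hc' ⊢
        have hga : 0 < g a := by
          by_contra h0
          have hz' : g a = 0 := le_antisymm (not_lt.1 h0) (hg0 a)
          rw [hz', zero_mul] at ha
          exact lt_irrefl 0 ha
        have hgc : 0 < g c' := by
          by_contra h0
          have hz' : g c' = 0 := le_antisymm (not_lt.1 h0) (hg0 c')
          rw [hz', zero_mul] at hc'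
          exact lt_irrefl 0 hc'
        have hia := hgin a hga
        have hic := hgin c' hgc
        have hbk : k ≤ b := le_trans hia.1 hab
        have hbl : b ≤ l := le_trans hbc hic.2
        have hgb : 0 < g b := hgpos b hbk hbl
        have h12 : (1:ℝ) / 2 ≤ 1 + s * V b := hpos12 b (by omega) (by omega)
        exact mul_pos hgb (by linarith)
      · show 0 ≤ ∑ n ∈ Finset.Icc M N, h n * (p n * (1 + s * V n))
        have hcongr : ∀ n ∈ Finset.Icc M N,
            h n * (p n * (1 + s * V n)) = h n * p n + s * (h n * p n * V n) := fun n _ => by ring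
        rw [Finset.sum_congr rfl hcongr, Finset.sum_add_distrib, ← Finset.mul_sum, hHV]
        simpa using hEh
    obtain ⟨n₀, hn₀k, hn₀l, hVn₀⟩ := hVne
    have hmemP : (fun n => p n * (1 + ε * V n)) ∈ LCPmfSet q M N h :=
      hmain ε (le_of_eq (abs_of_pos hεpos))
    have hmemM : (fun n => p n * (1 + (-ε) * V n)) ∈ LCPmfSet q M N h :=
      hmain (-ε) (by rw [abs_neg, abs_of_pos hεpos])
    have hseg : p ∈ openSegment ℝ (fun n => p n * (1 + ε * V n))
        (fun n => p n * (1 + (-ε) * V n)) := by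
      refine ⟨1 / 2, 1 / 2, by norm_num, by norm_num, by norm_num, ?_⟩
      funext n
      simp only [Pi.add_apply, Pi.smul_apply, smul_eq_mul]
      ring
    have hqP := hp.2 (subset_convexHull ℝ _ hmemP) (subset_convexHull ℝ _ hmemM) hseg
    have hEq := congrFun hqP n₀
    have hpn₀ : 0 < p n₀ := by
      have hgn₀ : 0 < g n₀ := hgpos n₀ hn₀k hn₀l
      by_contra h0
      have hz' : p n₀ = 0 := le_antisymm (not_lt.1 h0) (hp0 n₀)
      simp only [hg, hz', zero_div] at hgn₀
      exact lt_irrefl 0 hgn₀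
    have hzz : p n₀ * (ε * V n₀) = 0 := by linear_combination hEq
    rcases mul_eq_zero.1 hzz with h' | h'
    · exact absurd h' (ne_of_gt hpn₀)
    · rcases mul_eq_zero.1 h' with h'' | h''
      · exact absurd h'' (ne_of_gt hεpos)
      · exact hVn₀ h''
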